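/- Let β be an ordinal and k, ℓ positive natural numbers. If there is an injective Boolean algebra homomorphism from the interval algebra Int(ω^β · k) into the interval algebra Int(ω^β · ℓ), then k ≤ ℓ. -/

import Mathlib

open Ordinal

/-- The collection of all finite unions of half-open intervals `[a,b)` and final
segments `[a,∞)` in a linear order `L`: the carrier of the interval algebra `Int(L)`,
viewed as a Boolean subalgebra of the powerset of `L`. -/
def IntAlgSets (L : Type*) [LinearOrder L] : Set (Set L) :=
  {S | ∃ I : Set (Set L), I.Finite ∧
    (∀ A ∈ I, (∃ a b : L, A = Set.Ico a b) ∨ ∃ a : L, A = Set.Ici a) ∧ S = ⋃₀ I}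

/-- There is an injective Boolean algebra homomorphism from the interval algebra `Int(L)`
into the interval algebra `Int(M)`: a map on interval sets preserving union, intersection,
complement, `∅` and the full set, and injective on `Int(L)`. -/
def IntAlgEmbedding (L M : Type*) [LinearOrder L] [LinearOrder M] : Prop :=
  ∃ f : Set L → Set M,
    (∀ S ∈ IntAlgSets L, f S ∈ IntAlgSets M) ∧
    (∀ S ∈ IntAlgSets L, ∀ T ∈ IntAlgSets L, f (S ∪ T) = f S ∪ f T) ∧
    (∀ S ∈ IntAlgSets L, ∀ T ∈ IntAlgSets L, f (S ∩ T) = f S ∩ f T) ∧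
    (∀ S ∈ IntAlgSets L, f Sᶜ = (f S)ᶜ) ∧
    f ∅ = ∅ ∧ f Set.univ = Set.univ ∧
    ∀ S ∈ IntAlgSets L, ∀ T ∈ IntAlgSets L, f S = f T → S = T

namespace IntAlgAux

open Set

/-- Image of a set of elements of `Iio δ` as a set of ordinals. -/
def extS {δ : Ordinal} (S : Set ↥(Set.Iio δ)) : Set Ordinal := Subtype.val '' S

/-- The "segment" of `Iio δ` determined by ordinals `u ≤ · < v`. -/
def seg (δ u v : Ordinal) : Set ↥(Set.Iio δ) := {x | u ≤ x.val ∧ x.val < v}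

lemma mem_extS {δ : Ordinal} {S : Set ↥(Set.Iio δ)} {x : Ordinal} :
    x ∈ extS S ↔ ∃ hx : x < δ, (⟨x, hx⟩ : ↥(Set.Iio δ)) ∈ S := by
  constructor
  · rintro ⟨y, hy, rfl⟩
    exact ⟨y.2, by simpa using hy⟩
  · rintro ⟨hx, h⟩
    exact ⟨⟨x, hx⟩, h, rfl⟩

lemma extS_mono {δ : Ordinal} {S T : Set ↥(Set.Iio δ)} (h : S ⊆ T) : extS S ⊆ extS T :=
  Set.image_mono h

lemma extS_inter {δ : Ordinal} (S T : Set ↥(Set.Iio δ)) :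
    extS (S ∩ T) = extS S ∩ extS T :=
  Set.image_inter Subtype.val_injective

lemma extS_empty {δ : Ordinal} : extS (∅ : Set ↥(Set.Iio δ)) = ∅ := Set.image_empty _

lemma extS_seg {δ u v : Ordinal} (hv : v ≤ δ) : extS (seg δ u v) = Set.Ico u v := by
  ext x
  rw [mem_extS]
  constructor
  · rintro ⟨hx, h1, h2⟩; exact ⟨h1, h2⟩
  · rintro ⟨h1, h2⟩
    exact ⟨lt_of_lt_of_le h2 hv, h1, h2⟩

lemma seg_subset_iff {δ u v : Ordinal} (hv : v ≤ δ) {S : Set ↥(Set.Iio δ)} :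
    seg δ u v ⊆ S ↔ Set.Ico u v ⊆ extS S := by
  constructor
  · intro h x hx
    have hxδ : x < δ := lt_of_lt_of_le hx.2 hv
    rw [mem_extS]
    exact ⟨hxδ, h ⟨hx.1, hx.2⟩⟩
  · intro h x hx
    have : x.val ∈ extS S := h ⟨hx.1, hx.2⟩
    rw [mem_extS] at this
    obtain ⟨hx', hmem⟩ := this
    have hxx : (⟨x.val, hx'⟩ : ↥(Set.Iio δ)) = x := Subtype.ext rfl
    rwa [hxx] at hmem

lemma empty_mem_IntAlgSets (L : Type*) [LinearOrder L] : (∅ : Set L) ∈ IntAlgSets L :=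
  ⟨∅, Set.finite_empty, by simp, by simp⟩

lemma seg_eq_Ico {δ u v : Ordinal} (hu : u < δ) (hv : v < δ) :
    seg δ u v = Set.Ico (⟨u, hu⟩ : ↥(Set.Iio δ)) ⟨v, hv⟩ := by
  ext x
  simp only [seg, Set.mem_setOf_eq, Set.mem_Ico, ← Subtype.coe_le_coe, ← Subtype.coe_lt_coe]

lemma seg_eq_Ici {δ u : Ordinal} (hu : u < δ) :
    seg δ u δ = Set.Ici (⟨u, hu⟩ : ↥(Set.Iio δ)) := by
  ext x
  simp only [seg, Set.mem_setOf_eq, Set.mem_Ici, ← Subtype.coe_le_coe]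
  exact ⟨fun h => h.1, fun h => ⟨h, x.2⟩⟩

lemma seg_mem_IntAlgSets {δ u v : Ordinal} (hu : u < δ) (hv : v ≤ δ) :
    seg δ u v ∈ IntAlgSets ↥(Set.Iio δ) := by
  rcases eq_or_lt_of_le hv with rfl | hvlt
  · rw [seg_eq_Ici hu]
    exact ⟨{Set.Ici ⟨u, hu⟩}, Set.finite_singleton _,
      by rintro A rfl; exact Or.inr ⟨_, rfl⟩, by simp⟩
  · rw [seg_eq_Ico hu hvlt]
    exact ⟨{Set.Ico ⟨u, hu⟩ ⟨v, hvlt⟩}, Set.finite_singleton _,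
      by rintro A rfl; exact Or.inl ⟨_, _, rfl⟩, by simp⟩

open scoped Classical in
/-- Endpoints of an interval set. -/
noncomputable def endpts {δ : Ordinal} (A : Set ↥(Set.Iio δ)) : Ordinal × Ordinal :=
  if h : ∃ a b : ↥(Set.Iio δ), A = Set.Ico a b then
    (h.choose.val, h.choose_spec.choose.val)
  else if h2 : ∃ a : ↥(Set.Iio δ), A = Set.Ici a then (h2.choose.val, δ) else (0, 0)

lemma extS_Ico {δ : Ordinal} (a b : ↥(Set.Iio δ)) :
    extS (Set.Ico a b) = Set.Ico a.val b.val := by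
  have : Set.Ico a b = seg δ a.val b.val := (seg_eq_Ico a.2 b.2).symm
  rw [this, extS_seg (le_of_lt b.2)]

lemma extS_Ici {δ : Ordinal} (a : ↥(Set.Iio δ)) :
    extS (Set.Ici a) = Set.Ico a.val δ := by
  have : Set.Ici a = seg δ a.val δ := (seg_eq_Ici a.2).symm
  rw [this, extS_seg le_rfl]

lemma endpts_spec {δ : Ordinal} {A : Set ↥(Set.Iio δ)}
    (hA : (∃ a b : ↥(Set.Iio δ), A = Set.Ico a b) ∨ ∃ a : ↥(Set.Iio δ), A = Set.Ici a) :
    (endpts A).2 ≤ δ ∧ extS A = Set.Ico (endpts A).1 (endpts A).2 := by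
  classical
  unfold endpts
  by_cases h : ∃ a b : ↥(Set.Iio δ), A = Set.Ico a b
  · rw [dif_pos h]
    have hAe := h.choose_spec.choose_spec
    constructor
    · exact le_of_lt h.choose_spec.choose.2
    · have h2 := extS_Ico h.choose h.choose_spec.choose
      rw [← hAe] at h2
      exact h2
  · rw [dif_neg h]
    have h2 : ∃ a : ↥(Set.Iio δ), A = Set.Ici a := hA.resolve_left h
    rw [dif_pos h2]
    constructor
    · exact le_rfl
    · have h3 := extS_Ici h2.choose
      rw [← h2.choose_spec] at h3
      exact h3

/-- Normal form: an interval-algebra set, pushed to ordinals, is a finite union of `Ico`s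
with right endpoints at most `δ`. -/
lemma exists_norm {δ : Ordinal} {S : Set ↥(Set.Iio δ)} (hS : S ∈ IntAlgSets ↥(Set.Iio δ)) :
    ∃ J : Finset (Ordinal × Ordinal), (∀ p ∈ J, p.2 ≤ δ) ∧
      extS S = ⋃ p ∈ J, Set.Ico p.1 p.2 := by
  obtain ⟨I, hIfin, hIint, rfl⟩ := hS
  refine ⟨(hIfin.image endpts).toFinset, ?_, ?_⟩
  · intro p hp
    rw [Set.Finite.mem_toFinset] at hp
    obtain ⟨A, hA, rfl⟩ := hp
    exact (endpts_spec (hIint A hA)).1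
  · have h1 : extS (⋃₀ I) = ⋃ A ∈ I, extS A := by
      unfold extS
      rw [Set.image_sUnion, Set.sUnion_image]
    rw [h1]
    ext x
    simp only [Set.mem_iUnion, Set.Finite.mem_toFinset, Set.mem_image, exists_prop]
    constructor
    · rintro ⟨A, hA, hx⟩
      rw [(endpts_spec (hIint A hA)).2] at hx
      exact ⟨endpts A, ⟨A, hA, rfl⟩, hx⟩
    · rintro ⟨p, ⟨A, hA, rfl⟩, hx⟩
      rw [← (endpts_spec (hIint A hA)).2] at hx
      exact ⟨A, hA, hx⟩

/-- Bigness: `S` contains a segment of length at least `ω ^ γ`. -/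
def Big (δ γ : Ordinal) (S : Set ↥(Set.Iio δ)) : Prop :=
  ∃ u v : Ordinal, u + omega0 ^ γ ≤ v ∧ v ≤ δ ∧ Set.Ico u v ⊆ extS S

lemma sepmax (γ : Ordinal) : ∀ (n : ℕ) (u : Ordinal) (s : Finset Ordinal) (hs : s.Nonempty),
    s.card = n + 1 → (∀ a ∈ s, u ≤ a) →
    (∀ a ∈ s, ∀ b ∈ s, a ≠ b → a + omega0 ^ γ ≤ b ∨ b + omega0 ^ γ ≤ a) →
    u + omega0 ^ γ * n ≤ s.max' hs := by
  intro n
  induction n with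
  | zero =>
    intro u s hs hcard hle _
    simpa using hle _ (s.max'_mem hs)
  | succ n IH =>
    intro u s hs hcard hle hsep
    set M := s.max' hs with hM
    have hMmem : M ∈ s := s.max'_mem hs
    set s' := s.erase M with hs'
    have hcard' : s'.card = n + 1 := by
      rw [hs', Finset.card_erase_of_mem hMmem, hcard]
      omega
    have hs'ne : s'.Nonempty := Finset.card_pos.mp (by omega)
    have hsub : s' ⊆ s := Finset.erase_subset _ _
    have hIH := IH u s' hs'ne hcard' (fun a ha => hle a (hsub ha))
      (fun a ha b hb hab => hsep a (hsub ha) b (hsub hb) hab)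
    set M' := s'.max' hs'ne with hM'
    have hM'mem : M' ∈ s' := s'.max'_mem hs'ne
    have hM'ne : M' ≠ M := Finset.ne_of_mem_erase hM'mem
    have hM'le : M' ≤ M := s.le_max' _ (hsub hM'mem)
    have hstep : M' + omega0 ^ γ ≤ M := by
      rcases hsep M' (hsub hM'mem) M hMmem hM'ne with h | h
      · exact h
      · exfalso
        have h0 : (0 : Ordinal) < omega0 ^ γ := opow_pos _ omega0_pos
        have : M < M + omega0 ^ γ := by
          conv_lhs => rw [← add_zero M]
          exact add_lt_add_right h0 M
        exact absurd (lt_of_lt_of_le this (le_trans h hM'le)) (lt_irrefl M)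
    calc u + omega0 ^ γ * (↑(n + 1) : Ordinal)
        = u + (omega0 ^ γ * ↑n + omega0 ^ γ) := by
          rw [Nat.cast_succ, mul_add, mul_one]
      _ = (u + omega0 ^ γ * ↑n) + omega0 ^ γ := by rw [add_assoc]
      _ ≤ M' + omega0 ^ γ := add_le_add_left hIH _
      _ ≤ M := hstep

lemma pos_opow_lt_add {x γ : Ordinal} : x < x + omega0 ^ γ := by
  conv_lhs => rw [← add_zero x]
  exact add_lt_add_right (opow_pos _ omega0_pos) x

/-- From cofinally many multiples: `x + ω^γ · n ≤ y` for all `n` gives `x + ω^(γ+1) ≤ y`. -/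
lemma add_opow_succ_le {x y γ : Ordinal} (h : ∀ n : ℕ, x + omega0 ^ γ * n ≤ y) :
    x + omega0 ^ (γ + 1) ≤ y := by
  rw [add_one_eq_succ, opow_succ]
  have hlim : Order.IsSuccLimit (omega0 ^ γ * omega0) :=
    isSuccLimit_mul (opow_pos _ omega0_pos) isSuccLimit_omega0
  rw [add_le_iff_of_isSuccLimit hlim]
  intro b hb
  rcases (lt_mul_iff_of_isSuccLimit isSuccLimit_omega0).1 hb with ⟨c, hc, hbc⟩
  rcases lt_omega0.1 hc with ⟨n, rfl⟩
  exact le_trans (add_lt_add_right hbc x).le (h n)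

/-- From `x + ω^γ' ≤ y` for all `γ' < γ` (`γ` limit) we get `x + ω^γ ≤ y`. -/
lemma add_opow_limit_le {x y γ : Ordinal} (hγ : Order.IsSuccLimit γ)
    (h : ∀ γ' < γ, x + omega0 ^ γ' ≤ y) : x + omega0 ^ γ ≤ y := by
  have hlim : Order.IsSuccLimit (omega0 ^ γ) := isSuccLimit_opow one_lt_omega0 hγ
  rw [add_le_iff_of_isSuccLimit hlim]
  intro b hb
  rcases (lt_opow_of_isSuccLimit omega0_ne_zero hγ).1 hb with ⟨c, hc, hbc⟩
  exact le_trans (add_lt_add_right hbc x).le (h c hc)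

/-- Pigeonhole: diagonalize bigness over a finite family at a limit ordinal. -/
lemma diagLimit (J : Finset (Ordinal × Ordinal)) {γ : Ordinal} (hγ : Order.IsSuccLimit γ)
    (h : ∀ γ' < γ, ∃ p ∈ J, p.1 + omega0 ^ γ' ≤ p.2) :
    ∃ p ∈ J, p.1 + omega0 ^ γ ≤ p.2 := by
  by_contra hcon
  push_neg at hcon
  have hex : ∀ p ∈ J, ∃ γ', γ' < γ ∧ ¬(p.1 + omega0 ^ γ' ≤ p.2) := by
    intro p hp
    by_contra hc
    push_neg at hc
    exact absurd (add_opow_limit_le hγ fun γ' h' => hc γ' h') (hcon p hp).not_ge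
  classical
  choose gg hg1 hg2 using hex
  have hγslt : (J.sup fun q => if hq : q ∈ J then gg q hq else 0) < γ := by
    rw [Finset.sup_lt_iff hγ.pos]
    intro q hq
    rw [dif_pos hq]
    exact hg1 q hq
  obtain ⟨p, hp, hple⟩ := h _ hγslt
  have hgle : gg p hp ≤ J.sup fun q => if hq : q ∈ J then gg q hq else 0 := by
    have h1 : (if hq : p ∈ J then gg p hq else 0) ≤
        J.sup fun q => if hq : q ∈ J then gg q hq else 0 :=
      Finset.le_sup (f := fun q => if hq : q ∈ J then gg q hq else 0) hp
    rwa [dif_pos hp] at h1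
  have : p.1 + omega0 ^ gg p hp ≤ p.2 := by
    refine le_trans (add_le_add_right ?_ _) hple
    exact opow_le_opow_right omega0_pos hgle
  exact absurd this (hg2 p hp)

/-- Key pigeonhole lemma: if a finite union of `Ico`s contains arbitrarily many
pairwise `ω^γ`-separated points, some constituent has length at least `ω^(γ+1)`. -/
lemma keyPw (γ : Ordinal) (J : Finset (Ordinal × Ordinal)) (T : Set Ordinal)
    (hT : T = ⋃ p ∈ J, Set.Ico p.1 p.2)
    (h : ∀ n : ℕ, ∃ a : Fin n → Ordinal, (∀ i, a i ∈ T) ∧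
      ∀ i j, i ≠ j → a i + omega0 ^ γ ≤ a j ∨ a j + omega0 ^ γ ≤ a i) :
    ∃ p ∈ J, p.1 + omega0 ^ (γ + 1) ≤ p.2 := by
  classical
  have hJne : J.Nonempty := by
    obtain ⟨a, haT, -⟩ := h 1
    have := haT 0
    rw [hT] at this
    obtain ⟨p, hp, -⟩ := Set.mem_iUnion₂.mp this
    exact ⟨p, hp⟩
  have step1 : ∀ w : ℕ, ∃ p ∈ J, p.1 + omega0 ^ γ * w ≤ p.2 := by
    intro w
    obtain ⟨a, haT, hsep⟩ := h (J.card * (w + 1))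
    have hainj : Function.Injective a := by
      intro i j hij
      by_contra hne
      rcases hsep i j hne with h' | h' <;>
        · rw [hij] at h'
          exact absurd (lt_of_lt_of_le pos_opow_lt_add h') (lt_irrefl _)
    set s := Finset.image a Finset.univ with hs
    have hscard : s.card = J.card * (w + 1) := by
      rw [hs, Finset.card_image_of_injective _ hainj, Finset.card_univ, Fintype.card_fin]
    set F : Ordinal → Ordinal × Ordinal := fun x =>
      if hx : ∃ p ∈ J, x ∈ Set.Ico p.1 p.2 then hx.choose else (0, 0) with hF
    have hmemT : ∀ x ∈ s, ∃ p ∈ J, x ∈ Set.Ico p.1 p.2 := by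
      intro x hx
      rw [hs] at hx
      simp only [Finset.mem_image, Finset.mem_univ, true_and] at hx
      obtain ⟨i, rfl⟩ := hx
      have := haT i
      rw [hT] at this
      obtain ⟨p, hp, hmem⟩ := Set.mem_iUnion₂.mp this
      exact ⟨p, hp, hmem⟩
    have hFmem : ∀ x ∈ s, F x ∈ J ∧ x ∈ Set.Ico (F x).1 (F x).2 := by
      intro x hx
      have hex := hmemT x hx
      rw [hF]
      simp only
      rw [dif_pos hex]
      exact ⟨hex.choose_spec.1, hex.choose_spec.2⟩
    have hmaps : ∀ x ∈ s, F x ∈ J := fun x hx => (hFmem x hx).1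
    obtain ⟨p, hpJ, hcount⟩ :=
      Finset.exists_le_card_fiber_of_mul_le_card_of_maps_to hmaps hJne
        (le_of_eq hscard.symm)
    set s' := {x ∈ s | F x = p} with hs'
    have hs'sub : s' ⊆ s := Finset.filter_subset _ _
    have hs'ne : s'.Nonempty := Finset.card_pos.mp (by omega)
    have hcard' : s'.card = (s'.card - 1) + 1 := by
      have : 0 < s'.card := Finset.card_pos.mpr hs'ne
      omega
    have hple : ∀ x ∈ s', p.1 ≤ x ∧ x < p.2 := by
      intro x hx
      rw [hs', Finset.mem_filter] at hx
      have := (hFmem x hx.1).2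
      rw [hx.2] at this
      exact ⟨this.1, this.2⟩
    have hsep' : ∀ x ∈ s', ∀ y ∈ s', x ≠ y →
        x + omega0 ^ γ ≤ y ∨ y + omega0 ^ γ ≤ x := by
      intro x hx y hy hxy
      have hx' := hs'sub hx
      have hy' := hs'sub hy
      rw [hs, Finset.mem_image] at hx' hy'
      obtain ⟨i, -, rfl⟩ := hx'
      obtain ⟨j, -, rfl⟩ := hy'
      exact hsep i j (fun hij => hxy (by rw [hij]))
    have hmax := sepmax γ (s'.card - 1) p.1 s' hs'ne hcard'.symm.symm
      (fun x hx => (hple x hx).1) hsep'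
    refine ⟨p, hpJ, ?_⟩
    have hwle : w ≤ s'.card - 1 := by omega
    calc p.1 + omega0 ^ γ * (w : Ordinal)
        ≤ p.1 + omega0 ^ γ * ((s'.card - 1 : ℕ) : Ordinal) := by
          exact add_le_add_right (mul_le_mul_right (Nat.cast_le.mpr hwle) _) _
      _ ≤ s'.max' hs'ne := hmax
      _ ≤ p.2 := (hple _ (s'.max'_mem hs'ne)).2.le
  -- diagonalize over w
  by_contra hcon
  push_neg at hcon
  have hex : ∀ p ∈ J, ∃ w : ℕ, ¬(p.1 + omega0 ^ γ * w ≤ p.2) := by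
    intro p hp
    by_contra hc
    push_neg at hc
    exact absurd (add_opow_succ_le hc) (hcon p hp).not_ge
  choose gg hg using hex
  obtain ⟨p, hp, hple⟩ := step1 (J.sup fun q => if hq : q ∈ J then gg q hq else 0)
  have hw0 : gg p hp ≤ J.sup fun q => if hq : q ∈ J then gg q hq else 0 := by
    have h1 : (if hq : p ∈ J then gg p hq else 0) ≤
        J.sup fun q => if hq : q ∈ J then gg q hq else 0 :=
      Finset.le_sup (f := fun q => if hq : q ∈ J then gg q hq else 0) hp
    rwa [dif_pos hp] at h1
  have : p.1 + omega0 ^ γ * (gg p hp : ℕ) ≤ p.2 :=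
    le_trans (add_le_add_right (mul_le_mul_right (Nat.cast_le.mpr hw0) _) _) hple
  exact absurd this (hg p hp)

/-- Cover lemma: a segment of length `ω^γ` inside a finite union of `Ico`s forces some
constituent to have length at least `ω^γ`. -/
lemma lemC (J : Finset (Ordinal × Ordinal)) :
    ∀ γ u v : Ordinal, u + omega0 ^ γ ≤ v →
      Set.Ico u v ⊆ (⋃ p ∈ J, Set.Ico p.1 p.2) → ∃ p ∈ J, p.1 + omega0 ^ γ ≤ p.2 := by
  intro γ
  induction γ using Ordinal.induction with
  | h γ IH =>
    intro u v h1 hsub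
    rcases Ordinal.zero_or_succ_or_isSuccLimit γ with rfl | ⟨γ₀, rfl⟩ | hlim
    · have humem : u ∈ Set.Ico u v := ⟨le_rfl, lt_of_lt_of_le pos_opow_lt_add h1⟩
      obtain ⟨p, hp, hup⟩ := Set.mem_iUnion₂.mp (hsub humem)
      refine ⟨p, hp, ?_⟩
      rw [opow_zero]
      calc p.1 + 1 ≤ u + 1 := add_le_add_left hup.1 _
        _ ≤ p.2 := Order.add_one_le_iff.mpr hup.2
    · have h1' : u + omega0 ^ (γ₀ + 1) ≤ v := by rwa [add_one_eq_succ]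
      have := keyPw γ₀ J (⋃ p ∈ J, Set.Ico p.1 p.2) rfl ?_
      · obtain ⟨p, hp, hplen⟩ := this
        exact ⟨p, hp, by rwa [← add_one_eq_succ]⟩
      intro n
      refine ⟨fun i => u + omega0 ^ γ₀ * (i : ℕ), fun i => ?_, fun i j hij => ?_⟩
      · apply hsub
        refine ⟨le_self_add, lt_of_lt_of_le ?_ h1'⟩
        rw [add_one_eq_succ, opow_succ]
        exact add_lt_add_right
          (mul_lt_mul_of_pos_left (nat_lt_omega0 _) (opow_pos _ omega0_pos)) _
      · have key : ∀ i j : Fin n, (i : ℕ) < (j : ℕ) →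
            (u + omega0 ^ γ₀ * (i : ℕ)) + omega0 ^ γ₀ ≤ u + omega0 ^ γ₀ * (j : ℕ) := by
          intro i j hij'
          rw [add_assoc, ← mul_add_one]
          refine add_le_add_right (mul_le_mul_right ?_ _) _
          have : ((i : ℕ) + 1 : ℕ) ≤ (j : ℕ) := hij'
          exact_mod_cast Nat.cast_le.mpr this
        rcases lt_or_gt_of_ne (fun hij' : (i : ℕ) = (j : ℕ) => hij (Fin.ext hij')) with h' | h'
        · exact Or.inl (key i j h')
        · exact Or.inr (key j i h')
    · apply diagLimit J hlim
      intro γ' hγ'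
      have hsmall : u + omega0 ^ γ' ≤ v :=
        le_trans (add_le_add_right (opow_le_opow_right omega0_pos hγ'.le) _) h1
      exact IH γ' hγ' u v hsmall hsub

end IntAlgAux

open IntAlgAux Set in
/-- Transfer lemma: the embedding `f` preserves `γ`-bigness. -/
lemma intAlg_transfer (δk δl : Ordinal)
    (f : Set ↥(Set.Iio δk) → Set ↥(Set.Iio δl))
    (hmem : ∀ S ∈ IntAlgSets ↥(Set.Iio δk), f S ∈ IntAlgSets ↥(Set.Iio δl))
    (hinter : ∀ S ∈ IntAlgSets ↥(Set.Iio δk), ∀ T ∈ IntAlgSets ↥(Set.Iio δk),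
      f (S ∩ T) = f S ∩ f T)
    (hempty : f ∅ = ∅)
    (hinj : ∀ S ∈ IntAlgSets ↥(Set.Iio δk), ∀ T ∈ IntAlgSets ↥(Set.Iio δk),
      f S = f T → S = T) :
    ∀ γ : Ordinal, ∀ S ∈ IntAlgSets ↥(Set.Iio δk), Big δk γ S → Big δl γ (f S) := by
  have hmono : ∀ S ∈ IntAlgSets ↥(Set.Iio δk), ∀ T ∈ IntAlgSets ↥(Set.Iio δk),
      S ⊆ T → f S ⊆ f T := by
    intro S hS T hT hST
    have : S ∩ T = S := Set.inter_eq_left.mpr hST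
    calc f S = f (S ∩ T) := by rw [this]
      _ = f S ∩ f T := hinter S hS T hT
      _ ⊆ f T := Set.inter_subset_right
  have hdisj : ∀ S ∈ IntAlgSets ↥(Set.Iio δk), ∀ T ∈ IntAlgSets ↥(Set.Iio δk),
      S ∩ T = ∅ → f S ∩ f T = ∅ := by
    intro S hS T hT hST
    rw [← hinter S hS T hT, hST, hempty]
  intro γ
  induction γ using Ordinal.induction with
  | h γ IH =>
    intro S hS hBig
    obtain ⟨J, hJ2, hJext⟩ := exists_norm (hmem S hS)
    rcases Ordinal.zero_or_succ_or_isSuccLimit γ with rfl | ⟨γ₀, rfl⟩ | hlim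
    · -- zero case
      obtain ⟨u, v, h1, h2, h3⟩ := hBig
      have hSne : S ≠ ∅ := by
        intro hc
        have : u ∈ extS S := h3 ⟨le_rfl, lt_of_lt_of_le pos_opow_lt_add h1⟩
        rw [hc, extS_empty] at this
        exact this
      have hfSne : f S ≠ ∅ := by
        intro hc
        exact hSne (hinj S hS ∅ (empty_mem_IntAlgSets _) (by rw [hc, hempty]))
      obtain ⟨x, hx⟩ := Set.nonempty_iff_ne_empty.mpr hfSne
      have hxe : (x : Ordinal) ∈ extS (f S) := ⟨x, hx, rfl⟩
      rw [hJext] at hxe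
      obtain ⟨p, hp, hxp⟩ := Set.mem_iUnion₂.mp hxe
      refine ⟨p.1, p.2, ?_, hJ2 p hp, ?_⟩
      · rw [opow_zero]
        calc p.1 + 1 ≤ ↑x + 1 := add_le_add_left hxp.1 _
          _ ≤ p.2 := Order.add_one_le_iff.mpr hxp.2
      · rw [hJext]
        intro x hx
        exact Set.mem_iUnion₂.mpr ⟨p, hp, hx⟩
    · -- successor case
      obtain ⟨u, v, h1, h2, h3⟩ := hBig
      have hsucc : ∃ p ∈ J, p.1 + omega0 ^ (γ₀ + 1) ≤ p.2 := by
        apply keyPw γ₀ J (extS (f S)) hJext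
        intro n
        -- the n pieces
        set a : Fin n → Ordinal := fun i => u + omega0 ^ γ₀ * (i : ℕ) with ha
        set b : Fin n → Ordinal := fun i => u + omega0 ^ γ₀ * ((i : ℕ) + 1) with hb
        have hbv : ∀ i, b i ≤ v := by
          intro i
          refine le_trans ?_ h1
          simp only [hb]
          rw [opow_succ]
          refine add_le_add_right (mul_le_mul_right ?_ _) _
          exact_mod_cast (nat_lt_omega0 ((i : ℕ) + 1)).le
        have hab : ∀ i, a i < b i := by
          intro i
          simp only [ha, hb]
          refine add_lt_add_right (mul_lt_mul_of_pos_left ?_ (opow_pos _ omega0_pos)) _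
          exact_mod_cast Nat.lt_succ_self _
        have haδ : ∀ i, a i < δk := fun i => lt_of_lt_of_le (lt_of_lt_of_le (hab i) (hbv i)) h2
        have hbδ : ∀ i, b i ≤ δk := fun i => le_trans (hbv i) h2
        set P : Fin n → Set ↥(Set.Iio δk) := fun i => seg δk (a i) (b i) with hP
        have hPmem : ∀ i, P i ∈ IntAlgSets ↥(Set.Iio δk) :=
          fun i => seg_mem_IntAlgSets (haδ i) (hbδ i)
        have hPBig : ∀ i, Big δk γ₀ (P i) := by
          intro i
          refine ⟨a i, b i, ?_, hbδ i, ?_⟩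
          · simp only [ha, hb]
            rw [add_assoc, ← mul_add_one]
          · simp only [hP]
            rw [extS_seg (hbδ i)]
        have hPsub : ∀ i, P i ⊆ S := by
          intro i
          simp only [hP]
          rw [seg_subset_iff (hbδ i)]
          intro x hx
          apply h3
          exact ⟨le_trans (le_self_add) hx.1, lt_of_lt_of_le hx.2 (le_trans (hbv i) le_rfl)⟩
        have hPdisj : ∀ i j : Fin n, i ≠ j → P i ∩ P j = ∅ := by
          have key : ∀ i j : Fin n, (i : ℕ) < (j : ℕ) → P i ∩ P j = ∅ := by
            intro i j hij
            ext x
            simp only [Set.mem_inter_iff, Set.mem_empty_iff_false, iff_false, not_and]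
            intro hxi hxj
            have h1' : x.val < b i := hxi.2
            have h2' : a j ≤ x.val := hxj.1
            have : b i ≤ a j := by
              simp only [ha, hb]
              refine add_le_add_right (mul_le_mul_right ?_ _) _
              exact_mod_cast Nat.cast_le.mpr hij
            exact absurd (lt_of_lt_of_le h1' (le_trans this h2')) (lt_irrefl _)
          intro i j hij
          rcases lt_or_gt_of_ne (fun h' : (i : ℕ) = (j : ℕ) => hij (Fin.ext h')) with h' | h'
          · exact key i j h'
          · rw [Set.inter_comm]; exact key j i h'
        have hfPBig : ∀ i, Big δl γ₀ (f (P i)) :=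
          fun i => IH γ₀ (Order.lt_succ γ₀) (P i) (hPmem i) (hPBig i)
        choose u' v' hu'1 hu'2 hu'3 using hfPBig
        refine ⟨u', fun i => ?_, fun i j hij => ?_⟩
        · have : u' i ∈ extS (f (P i)) :=
            hu'3 i ⟨le_rfl, lt_of_lt_of_le pos_opow_lt_add (hu'1 i)⟩
          exact extS_mono (hmono (P i) (hPmem i) S hS (hPsub i)) this
        · have hdisjext : ∀ i j : Fin n, i ≠ j → extS (f (P i)) ∩ extS (f (P j)) = ∅ := by
            intro i j hij'
            rw [← extS_inter, hdisj (P i) (hPmem i) (P j) (hPmem j) (hPdisj i j hij'),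
              extS_empty]
          have humem : ∀ i, u' i ∈ extS (f (P i)) :=
            fun i => hu'3 i ⟨le_rfl, lt_of_lt_of_le pos_opow_lt_add (hu'1 i)⟩
          have key : ∀ i j : Fin n, i ≠ j → u' i < u' j → u' i + omega0 ^ γ₀ ≤ u' j := by
            intro i j hij' hlt
            have : ¬(u' j < v' i) := by
              intro hc
              have : u' j ∈ extS (f (P i)) := hu'3 i ⟨hlt.le, hc⟩
              have h0 := hdisjext i j hij'
              exact absurd (Set.mem_inter this (humem j)) (by rw [h0]; exact id)
            exact le_trans (hu'1 i) (not_lt.mp this)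
          rcases lt_trichotomy (u' i) (u' j) with h' | h' | h'
          · exact Or.inl (key i j hij h')
          · exfalso
            have h0 := hdisjext i j hij
            have : u' i ∈ extS (f (P j)) := by rw [h']; exact humem j
            exact absurd (Set.mem_inter (humem i) this) (by rw [h0]; exact id)
          · exact Or.inr (key j i (Ne.symm hij) h')
      obtain ⟨p, hp, hplen⟩ := hsucc
      refine ⟨p.1, p.2, by rwa [add_one_eq_succ] at hplen, hJ2 p hp, ?_⟩
      rw [hJext]
      intro x hx
      exact Set.mem_iUnion₂.mpr ⟨p, hp, hx⟩
    · -- limit case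
      have hall : ∀ γ' < γ, ∃ p ∈ J, p.1 + omega0 ^ γ' ≤ p.2 := by
        intro γ' hγ'
        have hBig' : Big δk γ' S := by
          obtain ⟨u, v, h1, h2, h3⟩ := hBig
          exact ⟨u, v, le_trans (add_le_add_right
            (opow_le_opow_right omega0_pos hγ'.le) _) h1, h2, h3⟩
        obtain ⟨u₀, v₀, hb1, hb2, hb3⟩ := IH γ' hγ' S hS hBig'
        rw [hJext] at hb3
        exact lemC J γ' u₀ v₀ hb1 hb3
      obtain ⟨p, hp, hplen⟩ := diagLimit J hlim hall
      refine ⟨p.1, p.2, hplen, hJ2 p hp, ?_⟩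
      rw [hJext]
      intro x hx
      exact Set.mem_iUnion₂.mpr ⟨p, hp, hx⟩

open IntAlgAux in
private lemma intAlg_count (β : Ordinal) (k l : ℕ) (hk : 0 < k)
    (δk δl : Ordinal) (hδk : δk = omega0 ^ β * (k : Ordinal))
    (hδl : δl = omega0 ^ β * (l : Ordinal))
    (f : Set ↥(Set.Iio δk) → Set ↥(Set.Iio δl))
    (hmem : ∀ S ∈ IntAlgSets ↥(Set.Iio δk), f S ∈ IntAlgSets ↥(Set.Iio δl))
    (hinter : ∀ S ∈ IntAlgSets ↥(Set.Iio δk), ∀ T ∈ IntAlgSets ↥(Set.Iio δk),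
      f (S ∩ T) = f S ∩ f T)
    (hempty : f ∅ = ∅)
    (hinj : ∀ S ∈ IntAlgSets ↥(Set.Iio δk), ∀ T ∈ IntAlgSets ↥(Set.Iio δk),
      f S = f T → S = T) :
    k ≤ l := by
  classical
  have htrans := intAlg_transfer δk δl f hmem hinter hempty hinj
  -- the k blocks
  set a : Fin k → Ordinal := fun i => omega0 ^ β * (i : ℕ) with ha
  set b : Fin k → Ordinal := fun i => omega0 ^ β * ((i : ℕ) + 1) with hb
  have hbδ : ∀ i, b i ≤ δk := by
    intro i
    simp only [hb]
    rw [hδk]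
    refine mul_le_mul_right ?_ _
    exact_mod_cast Nat.cast_le.mpr i.isLt
  have hab : ∀ i, a i < b i := by
    intro i
    simp only [ha, hb]
    refine mul_lt_mul_of_pos_left ?_ (opow_pos _ omega0_pos)
    exact_mod_cast Nat.lt_succ_self _
  have haδ : ∀ i, a i < δk := fun i => lt_of_lt_of_le (hab i) (hbδ i)
  set B : Fin k → Set ↥(Set.Iio δk) := fun i => seg δk (a i) (b i) with hB
  have hBmem : ∀ i, B i ∈ IntAlgSets ↥(Set.Iio δk) :=
    fun i => seg_mem_IntAlgSets (haδ i) (hbδ i)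
  have hBBig : ∀ i, Big δk β (B i) := by
    intro i
    refine ⟨a i, b i, ?_, hbδ i, ?_⟩
    · simp only [ha, hb]
      rw [mul_add_one]
    · exact (extS_seg (hbδ i)).symm.subset
  have hBdisj : ∀ i j : Fin k, i ≠ j → B i ∩ B j = ∅ := by
    have key : ∀ i j : Fin k, (i : ℕ) < (j : ℕ) → B i ∩ B j = ∅ := by
      intro i j hij
      ext x
      simp only [Set.mem_inter_iff, Set.mem_empty_iff_false, iff_false, not_and]
      intro hxi hxj
      have h1' : x.val < b i := hxi.2
      have h2' : a j ≤ x.val := hxj.1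
      have hba : b i ≤ a j := by
        simp only [ha, hb]
        refine mul_le_mul_right ?_ _
        exact_mod_cast Nat.cast_le.mpr hij
      exact absurd (lt_of_lt_of_le h1' (le_trans hba h2')) (lt_irrefl _)
    intro i j hij
    rcases lt_or_gt_of_ne (fun h' : (i : ℕ) = (j : ℕ) => hij (Fin.ext h')) with h' | h'
    · exact key i j h'
    · rw [Set.inter_comm]; exact key j i h'
  have hfBig : ∀ i, Big δl β (f (B i)) := fun i => htrans β (B i) (hBmem i) (hBBig i)
  choose u' v' hu'1 hu'2 hu'3 using hfBig
  have hdisjext : ∀ i j : Fin k, i ≠ j → extS (f (B i)) ∩ extS (f (B j)) = ∅ := by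
    intro i j hij
    rw [← extS_inter, ← hinter (B i) (hBmem i) (B j) (hBmem j), hBdisj i j hij, hempty,
      extS_empty]
  have humem : ∀ i, u' i ∈ extS (f (B i)) :=
    fun i => hu'3 i ⟨le_rfl, lt_of_lt_of_le pos_opow_lt_add (hu'1 i)⟩
  have hsep : ∀ i j : Fin k, i ≠ j →
      u' i + omega0 ^ β ≤ u' j ∨ u' j + omega0 ^ β ≤ u' i := by
    have key : ∀ i j : Fin k, i ≠ j → u' i < u' j → u' i + omega0 ^ β ≤ u' j := by
      intro i j hij hlt
      have : ¬(u' j < v' i) := by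
        intro hc
        have hm : u' j ∈ extS (f (B i)) := hu'3 i ⟨hlt.le, hc⟩
        exact absurd (Set.mem_inter hm (humem j)) (by rw [hdisjext i j hij]; exact id)
      exact le_trans (hu'1 i) (not_lt.mp this)
    intro i j hij
    rcases lt_trichotomy (u' i) (u' j) with h' | h' | h'
    · exact Or.inl (key i j hij h')
    · exfalso
      have : u' i ∈ extS (f (B j)) := by rw [h']; exact humem j
      exact absurd (Set.mem_inter (humem i) this) (by rw [hdisjext i j hij]; exact id)
    · exact Or.inr (key j i (Ne.symm hij) h')
  have hu'inj : Function.Injective u' := by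
    intro i j hij
    by_contra hne
    rcases hsep i j hne with h' | h' <;>
      · rw [hij] at h'
        exact absurd (lt_of_lt_of_le pos_opow_lt_add h') (lt_irrefl _)
  set s := Finset.image u' Finset.univ with hs
  have hscard : s.card = k := by
    rw [hs, Finset.card_image_of_injective _ hu'inj, Finset.card_univ, Fintype.card_fin]
  have hsne : s.Nonempty := by
    rw [← Finset.card_pos, hscard]; exact hk
  have hsep' : ∀ x ∈ s, ∀ y ∈ s, x ≠ y →
      x + omega0 ^ β ≤ y ∨ y + omega0 ^ β ≤ x := by
    intro x hx y hy hxy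
    rw [hs, Finset.mem_image] at hx hy
    obtain ⟨i, -, rfl⟩ := hx
    obtain ⟨j, -, rfl⟩ := hy
    exact hsep i j (fun hij => hxy (by rw [hij]))
  have hmax := sepmax β (k - 1) 0 s hsne (by omega) (fun x _ => zero_le) hsep'
  rw [zero_add] at hmax
  have hmaxmem := s.max'_mem hsne
  obtain ⟨i, -, hi⟩ := Finset.mem_image.mp hmaxmem
  have hchain : omega0 ^ β * ((k - 1 : ℕ) : Ordinal) + omega0 ^ β ≤ δl := by
    calc omega0 ^ β * ((k - 1 : ℕ) : Ordinal) + omega0 ^ β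
        ≤ u' i + omega0 ^ β := add_le_add_left (by rw [hi]; exact hmax) _
      _ ≤ v' i := hu'1 i
      _ ≤ δl := hu'2 i
  rw [← mul_add_one] at hchain
  have hcast : ((k - 1 : ℕ) : Ordinal) + 1 = (k : Ordinal) := by
    have h' : (k - 1) + 1 = k := by omega
    exact_mod_cast h'
  rw [hcast, hδl] at hchain
  have := le_of_mul_le_mul_left hchain (opow_pos β omega0_pos)
  exact_mod_cast this

/-- If there is an injective Boolean algebra homomorphism from `Int(ω^β · k)` into
`Int(ω^β · ℓ)`, with `k, ℓ` positive, then `k ≤ ℓ`. -/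
theorem intAlg_embedding_le (β : Ordinal) (k l : ℕ) (hk : 0 < k) (hl : 0 < l)
    (h : IntAlgEmbedding ↥(Set.Iio (omega0 ^ β * (k : Ordinal)))
      ↥(Set.Iio (omega0 ^ β * (l : Ordinal)))) :
    k ≤ l := by
  obtain ⟨f, hmem, -, hinter, -, hempty, -, hinj⟩ := h
  exact intAlg_count β k l hk _ _ rfl rfl f hmem hinter hempty hinj
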